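/- If the list X ++ [i] ++ Y is an efficiency-maximizing assignment of some fixed number of slots over a bidder set containing both i and j, where j does not appear in the assignment, e_j ≥ e_i, and e_j/(1−q_j) ≥ e_i/(1−q_i), then the list X ++ [j] ++ Y (substituting j for i) has efficiency at least as large, hence is also optimal. -/

import Mathlib

noncomputable section

/-- Efficiency of an ordered list of ads `(e, q)`. -/
def eff : List (ℝ × ℝ) → ℝ
  | [] => 0
  | a :: L => a.1 + a.2 * eff L

/-- Product of continuation probabilities of a list of ads. -/
def qprod (L : List (ℝ × ℝ)) : ℝ := (L.map Prod.snd).prod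

lemma eff_append (X Y : List (ℝ × ℝ)) :
    eff (X ++ Y) = eff X + qprod X * eff Y := by
  induction X with
  | nil => simp [eff, qprod]
  | cons a X ih =>
    simp only [List.cons_append, eff, qprod, List.map_cons, List.prod_cons] at *
    rw [ih]; ring

lemma qprod_nonneg (X : List (ℝ × ℝ)) (h : ∀ a ∈ X, 0 ≤ a.2) : 0 ≤ qprod X := by
  induction X with
  | nil => simp [qprod]
  | cons a X ih =>
    simp only [qprod, List.map_cons, List.prod_cons]
    exact mul_nonneg (h a (by simp)) (ih fun b hb => h b (by simp [hb]))

lemma eff_nonneg (L : List (ℝ × ℝ)) (h : ∀ a ∈ L, 0 ≤ a.1 ∧ 0 ≤ a.2) : 0 ≤ eff L := by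
  induction L with
  | nil => simp [eff]
  | cons a L ih =>
    have ha := h a (by simp)
    have := ih fun b hb => h b (by simp [hb])
    simp only [eff]
    nlinarith [mul_nonneg ha.2 this]

/-- Theorem 2 (bidder dominance): if `X ++ [i] ++ Y` is an optimal assignment over a
bidder set `C` containing an unassigned bidder `j` with `e_j ≥ e_i` and
`a_j ≥ a_i`, then substituting `j` for `i` gives an assignment that is no worse,
hence also optimal. -/
theorem dominance_substitution_optimal
    (C : Finset (ℝ × ℝ))
    (hC : ∀ a ∈ C, 0 ≤ a.1 ∧ 0 ≤ a.2 ∧ a.2 < 1)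
    (X Y : List (ℝ × ℝ)) (i j : ℝ × ℝ)
    (hmem : ∀ a ∈ X ++ [i] ++ Y, a ∈ C)
    (hnd : (X ++ [i] ++ Y).Nodup)
    (hjC : j ∈ C) (hjnot : j ∉ X ++ [i] ++ Y)
    (he : j.1 ≥ i.1)
    (ha : j.1 / (1 - j.2) ≥ i.1 / (1 - i.2))
    (hopt : ∀ T : List (ℝ × ℝ), T.Nodup → (∀ a ∈ T, a ∈ C) →
      T.length ≤ (X ++ [i] ++ Y).length → eff T ≤ eff (X ++ [i] ++ Y)) :
    eff (X ++ [j] ++ Y) ≥ eff (X ++ [i] ++ Y) ∧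
    (∀ T : List (ℝ × ℝ), T.Nodup → (∀ a ∈ T, a ∈ C) →
      T.length ≤ (X ++ [j] ++ Y).length → eff T ≤ eff (X ++ [j] ++ Y)) := by
  have hiC : i ∈ C := hmem i (by simp)
  obtain ⟨hi1, hi2, hi3⟩ := hC i hiC
  obtain ⟨hj1, hj2, hj3⟩ := hC j hjC
  have h1i : (0:ℝ) < 1 - i.2 := by linarith
  have h1j : (0:ℝ) < 1 - j.2 := by linarith
  have hYC : ∀ a ∈ Y, a ∈ C := fun a haY => hmem a (by simp [haY])
  have hXC : ∀ a ∈ X, a ∈ C := fun a haX => hmem a (by simp [haX])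
  have htY : 0 ≤ eff Y := eff_nonneg Y fun a haY =>
    ⟨(hC a (hYC a haY)).1, (hC a (hYC a haY)).2.1⟩
  have hqX : 0 ≤ qprod X := qprod_nonneg X fun a haX => (hC a (hXC a haX)).2.1
  -- key expansion
  have hexp : ∀ a : ℝ × ℝ, eff (X ++ [a] ++ Y) = eff X + qprod X * (a.1 + a.2 * eff Y) := by
    intro a
    rw [List.append_assoc, eff_append]
    simp [eff]
  have hmain : eff (X ++ [j] ++ Y) ≥ eff (X ++ [i] ++ Y) := by
    rcases eq_or_lt_of_le hqX with hq0 | hqpos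
    · rw [hexp i, hexp j, ← hq0]; simp
    · -- compare with X ++ Y to bound eff Y
      have hsub : (X ++ Y).Sublist (X ++ [i] ++ Y) := by
        rw [List.append_assoc]
        exact (List.sublist_cons_self i Y).append_left X
      have hXY := hopt (X ++ Y) (hnd.sublist hsub)
        (fun a haXY => hmem a (hsub.mem haXY)) (by simp)
      rw [eff_append, hexp i] at hXY
      have hbound : eff Y * (1 - i.2) ≤ i.1 := by
        have := (mul_le_mul_iff_right₀ hqpos).mp (by linarith : qprod X * eff Y ≤ qprod X * (i.1 + i.2 * eff Y))
        nlinarith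
      have hacl : i.1 * (1 - j.2) ≤ j.1 * (1 - i.2) := by
        rw [ge_iff_le, div_le_div_iff₀ h1i h1j] at ha
        linarith
      have hkey : i.1 + i.2 * eff Y ≤ j.1 + j.2 * eff Y := by
        rcases le_or_gt i.2 j.2 with hle | hlt
        · nlinarith
        · nlinarith [mul_le_mul_of_nonneg_left hbound (by linarith : (0:ℝ) ≤ i.2 - j.2)]
      rw [hexp i, hexp j]
      nlinarith
  refine ⟨hmain, fun T hTnd hTC hTlen => ?_⟩
  have := hopt T hTnd hTC (by simpa using hTlen)
  linarith
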